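/- Let Φ be a finite set of points in ℝ² \ {0} with positive marks (fading gains) h_x > 0, and let x* be a point of Φ with minimal norm. If h_{x*}‖x*‖^{-α₀} > T · Σ_{y∈Φ\{x*}} h_y ‖y‖^{-α₀} for some T > 0, then h_{x*} l₂(x*) ≥ T · Σ_{y∈Φ\{x*}} h_y l₂(y), where l₂ is the dual-slope path loss with exponents 0 ≤ α₀ ≤ α₁ and critical distance R_c. (SIR under the dual-slope law is at least the SIR under the near-field single-slope law.) -/

import Mathlib

open Real
open scoped Classical

noncomputable def dualSlope (Rc α₀ α₁ r : ℝ) : ℝ :=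
  if r ≤ Rc then r ^ (-α₀) else Rc ^ (α₁ - α₀) * r ^ (-α₁)

lemma dualSlope_pos (Rc α₀ α₁ r : ℝ) (hRc : 0 < Rc) (hr : 0 < r) :
    0 < dualSlope Rc α₀ α₁ r := by
  unfold dualSlope
  split
  · exact rpow_pos_of_pos hr _
  · exact mul_pos (rpow_pos_of_pos hRc _) (rpow_pos_of_pos hr _)

lemma dualSlope_le (Rc α₀ α₁ r : ℝ) (hRc : 0 < Rc) (hr : 0 < r) (hα : α₀ ≤ α₁) :
    dualSlope Rc α₀ α₁ r ≤ r ^ (-α₀) := by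
  unfold dualSlope
  split
  · exact le_rfl
  · rename_i hRcr
    push_neg at hRcr
    calc Rc ^ (α₁ - α₀) * r ^ (-α₁) ≤ r ^ (α₁ - α₀) * r ^ (-α₁) := by
          exact mul_le_mul_of_nonneg_right
            (rpow_le_rpow hRc.le hRcr.le (by linarith)) (rpow_nonneg hr.le _)
      _ = r ^ (-α₀) := by rw [← Real.rpow_add hr]; ring_nf

lemma dualSlope_key (Rc α₀ α₁ s r : ℝ) (hRc : 0 < Rc) (hα : α₀ ≤ α₁)
    (hs : 0 < s) (hsr : s ≤ r) :
    s ^ (-α₀) * dualSlope Rc α₀ α₁ r ≤ dualSlope Rc α₀ α₁ s * r ^ (-α₀) := by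
  have hr : 0 < r := lt_of_lt_of_le hs hsr
  by_cases hsRc : s ≤ Rc
  · have h1 : dualSlope Rc α₀ α₁ s = s ^ (-α₀) := if_pos hsRc
    rw [h1]
    exact mul_le_mul_of_nonneg_left (dualSlope_le Rc α₀ α₁ r hRc hr hα)
      (rpow_nonneg hs.le _)
  · push_neg at hsRc
    have hrRc : ¬ r ≤ Rc := by linarith
    have h1 : dualSlope Rc α₀ α₁ s = Rc ^ (α₁ - α₀) * s ^ (-α₁) := if_neg (not_le.mpr hsRc)
    have h2 : dualSlope Rc α₀ α₁ r = Rc ^ (α₁ - α₀) * r ^ (-α₁) := if_neg hrRc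
    rw [h1, h2]
    -- s^(-α₀) * (Rc^(α₁-α₀) * r^(-α₁)) ≤ Rc^(α₁-α₀) * s^(-α₁) * r^(-α₀)
    have key : s ^ (-α₀) * r ^ (-α₁) ≤ s ^ (-α₁) * r ^ (-α₀) := by
      have h3 : r ^ (α₀ - α₁) ≤ s ^ (α₀ - α₁) :=
        rpow_le_rpow_of_nonpos hs hsr (by linarith)
      have hsr0 : 0 < s ^ (-α₀) * r ^ (-α₀) := by positivity
      have e1 : s ^ (-α₁) = s ^ (-α₀) * s ^ (α₀ - α₁) := by
        rw [← Real.rpow_add hs]; ring_nf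
      have e2 : r ^ (-α₁) = r ^ (-α₀) * r ^ (α₀ - α₁) := by
        rw [← Real.rpow_add hr]; ring_nf
      rw [e1, e2]
      calc s ^ (-α₀) * (r ^ (-α₀) * r ^ (α₀ - α₁))
          = (s ^ (-α₀) * r ^ (-α₀)) * r ^ (α₀ - α₁) := by ring
        _ ≤ (s ^ (-α₀) * r ^ (-α₀)) * s ^ (α₀ - α₁) := by
            exact mul_le_mul_of_nonneg_left h3 hsr0.le
        _ = s ^ (-α₀) * s ^ (α₀ - α₁) * r ^ (-α₀) := by ring
    calc s ^ (-α₀) * (Rc ^ (α₁ - α₀) * r ^ (-α₁))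
        = Rc ^ (α₁ - α₀) * (s ^ (-α₀) * r ^ (-α₁)) := by ring
      _ ≤ Rc ^ (α₁ - α₀) * (s ^ (-α₁) * r ^ (-α₀)) := by
          exact mul_le_mul_of_nonneg_left key (rpow_nonneg hRc.le _)
      _ = Rc ^ (α₁ - α₀) * s ^ (-α₁) * r ^ (-α₀) := by ring

theorem stmt_4 (Rc α₀ α₁ T : ℝ) (hRc : 0 < Rc) (hα₀ : 0 ≤ α₀) (hα : α₀ ≤ α₁) (hT : 0 < T)
    (Φ : Finset (EuclideanSpace ℝ (Fin 2))) (hΦ : ∀ y ∈ Φ, y ≠ 0)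
    (h : EuclideanSpace ℝ (Fin 2) → ℝ) (hh : ∀ y ∈ Φ, 0 < h y)
    (xs : EuclideanSpace ℝ (Fin 2)) (hxs : xs ∈ Φ) (hmin : ∀ y ∈ Φ, ‖xs‖ ≤ ‖y‖)
    (hSIR : h xs * ‖xs‖ ^ (-α₀) > T * ∑ y ∈ Φ.erase xs, h y * ‖y‖ ^ (-α₀)) :
    h xs * dualSlope Rc α₀ α₁ ‖xs‖ ≥
      T * ∑ y ∈ Φ.erase xs, h y * dualSlope Rc α₀ α₁ ‖y‖ := by
  have hxs0 : 0 < ‖xs‖ := norm_pos_iff.mpr (hΦ xs hxs)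
  have hds : 0 < dualSlope Rc α₀ α₁ ‖xs‖ := dualSlope_pos _ _ _ _ hRc hxs0
  have hpow : 0 < ‖xs‖ ^ (-α₀) := rpow_pos_of_pos hxs0 _
  -- multiply everything by ‖xs‖^(-α₀)
  rw [ge_iff_le, ← mul_le_mul_iff_right₀ hpow]
  have sum_le : ‖xs‖ ^ (-α₀) * ∑ y ∈ Φ.erase xs, h y * dualSlope Rc α₀ α₁ ‖y‖ ≤
      dualSlope Rc α₀ α₁ ‖xs‖ * ∑ y ∈ Φ.erase xs, h y * ‖y‖ ^ (-α₀) := by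
    rw [Finset.mul_sum, Finset.mul_sum]
    apply Finset.sum_le_sum
    intro y hy
    have hyΦ := Finset.mem_of_mem_erase hy
    have hkey := dualSlope_key Rc α₀ α₁ ‖xs‖ ‖y‖ hRc hα hxs0 (hmin y hyΦ)
    have hhy := (hh y hyΦ).le
    calc ‖xs‖ ^ (-α₀) * (h y * dualSlope Rc α₀ α₁ ‖y‖)
        = h y * (‖xs‖ ^ (-α₀) * dualSlope Rc α₀ α₁ ‖y‖) := by ring
      _ ≤ h y * (dualSlope Rc α₀ α₁ ‖xs‖ * ‖y‖ ^ (-α₀)) :=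
          mul_le_mul_of_nonneg_left hkey hhy
      _ = dualSlope Rc α₀ α₁ ‖xs‖ * (h y * ‖y‖ ^ (-α₀)) := by ring
  calc ‖xs‖ ^ (-α₀) * (T * ∑ y ∈ Φ.erase xs, h y * dualSlope Rc α₀ α₁ ‖y‖)
      = T * (‖xs‖ ^ (-α₀) * ∑ y ∈ Φ.erase xs, h y * dualSlope Rc α₀ α₁ ‖y‖) := by ring
    _ ≤ T * (dualSlope Rc α₀ α₁ ‖xs‖ * ∑ y ∈ Φ.erase xs, h y * ‖y‖ ^ (-α₀)) :=
        mul_le_mul_of_nonneg_left sum_le hT.le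
    _ = dualSlope Rc α₀ α₁ ‖xs‖ * (T * ∑ y ∈ Φ.erase xs, h y * ‖y‖ ^ (-α₀)) := by ring
    _ ≤ dualSlope Rc α₀ α₁ ‖xs‖ * (h xs * ‖xs‖ ^ (-α₀)) :=
        mul_le_mul_of_nonneg_left hSIR.le hds.le
    _ = ‖xs‖ ^ (-α₀) * (h xs * dualSlope Rc α₀ α₁ ‖xs‖) := by ring
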